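/- Let m > 1 divide n, let π be an (n,m)-piecewise affine permutation of [1,n]. Then every cycle of π has length divisible by m, and every cycle of π contains an element divisible by m. Moreover, if a cycle of π has length mt, then for each i in [1,m] that cycle contains exactly t elements congruent to i modulo m. -/

import Mathlib

/-- `psi k x` is the representative of `x` mod `k` in `[1, k]`. -/
def psi (k x : ℕ) : ℕ := if x % k = 0 then k else x % k

/-- `π` is an `(n,m)`-piecewise affine permutation of `[1,n]` with parameters
`(a, b, c)`: it permutes `[1,n]` (and is the identity elsewhere), the entries of
`a, b` lie in `[1,n]`, the entries of `c` form a permutation of `[1,m]`, and for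
`x ∈ [1,n]` with `Ψ_m(x) = c_i` one has `π(x) = Ψ_n(a_i x + b_i)` and
`Ψ_m(π(x)) = c_{i+1}`, indices cyclic modulo `m`. -/
def IsPAP (n m : ℕ) [NeZero m] (a b c : Fin m → ℕ) (π : ℕ → ℕ) : Prop :=
  Set.BijOn π (Set.Icc 1 n) (Set.Icc 1 n) ∧
  (∀ x : ℕ, x ∉ Set.Icc 1 n → π x = x) ∧
  (∀ i, a i ∈ Set.Icc 1 n) ∧ (∀ i, b i ∈ Set.Icc 1 n) ∧
  (∀ i, c i ∈ Set.Icc 1 m) ∧ Function.Injective c ∧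
  ∀ x ∈ Set.Icc 1 n, ∀ i, psi m x = c i →
    π x = psi n (a i * x + b i) ∧ psi m (π x) = c (i + 1)

lemma psi_mem (m x : ℕ) (hm : 0 < m) : psi m x ∈ Set.Icc 1 m := by
  unfold psi
  by_cases h : x % m = 0
  · simp only [h, if_pos]
    exact ⟨hm, le_refl m⟩
  · simp only [h, if_neg]
    exact ⟨Nat.one_le_iff_ne_zero.mpr h, (Nat.mod_lt _ hm).le⟩

lemma psi_eq_self_dvd (m y : ℕ) (hm : 0 < m) (h : psi m y = m) : m ∣ y := by
  unfold psi at h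
  by_cases h0 : y % m = 0
  · exact Nat.dvd_of_mod_eq_zero h0
  · rw [if_neg h0] at h
    have := Nat.mod_lt y hm
    omega

lemma count_mod (m t r : ℕ) (hr : r < m) :
    ((Finset.range (m * t)).filter (fun k => k % m = r)).card = t := by
  have hm : 0 < m := by omega
  have him : (Finset.range t).image (fun q => m * q + r) =
      (Finset.range (m * t)).filter (fun k => k % m = r) := by
    ext k
    simp only [Finset.mem_image, Finset.mem_filter, Finset.mem_range]
    constructor
    · rintro ⟨q, hq, rfl⟩
      refine ⟨?_, ?_⟩
      · have h1 : m * (q + 1) = m * q + m := by ring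
        have h2 : m * (q + 1) ≤ m * t := Nat.mul_le_mul_left m hq
        omega
      · simp [Nat.mul_add_mod, Nat.mod_eq_of_lt hr]
    · rintro ⟨hk, hkr⟩
      refine ⟨k / m, Nat.div_lt_of_lt_mul hk, ?_⟩
      rw [← hkr]
      exact Nat.div_add_mod k m
  rw [← him, Finset.card_image_of_injective _ ?_, Finset.card_range]
  intro p q hpq
  simp only at hpq
  exact Nat.eq_of_mul_eq_mul_left hm (by omega)

open Fin.NatCast
open Fin.CommRing

/-- Basic properties of the cycle decomposition of an `(n,m)`-p.a.p.:
every cycle has length divisible by `m`, contains a multiple of `m`, and a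
cycle of length `mt` contains exactly `t` elements in each residue class
`i ∈ [1,m]` modulo `m`. -/
theorem pap_cycle_basic (n m : ℕ) [NeZero m] (hm : 1 < m) (hmn : m ∣ n)
    (a b c : Fin m → ℕ) (π : ℕ → ℕ) (hpap : IsPAP n m a b c π) :
    ∀ x ∈ Set.Icc 1 n,
      m ∣ Function.minimalPeriod π x ∧
      (∃ k : ℕ, m ∣ π^[k] x) ∧
      (∀ i ∈ Set.Icc 1 m,
        ((Finset.range (Function.minimalPeriod π x)).filter
            (fun k => psi m (π^[k] x) = i)).card
          = Function.minimalPeriod π x / m) := by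
  obtain ⟨hbij, hid, ha, hb, hc, hcinj, hstep⟩ := hpap
  have hm0 : 0 < m := by omega
  have hmaps : Set.MapsTo π (Set.Icc 1 n) (Set.Icc 1 n) := hbij.mapsTo
  -- surjectivity of c onto [1, m]
  have hcsurj : ∀ v ∈ Set.Icc 1 m, ∃ j : Fin m, c j = v := by
    have h1 : (Finset.univ.image c) ⊆ Finset.Icc 1 m := by
      intro v hv
      simp only [Finset.mem_image, Finset.mem_univ, true_and] at hv
      obtain ⟨j, rfl⟩ := hv
      exact Finset.mem_Icc.mpr ⟨(hc j).1, (hc j).2⟩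
    have h2 : (Finset.univ.image c).card = m := by
      rw [Finset.card_image_of_injective _ hcinj, Finset.card_univ, Fintype.card_fin]
    have h3 : Finset.univ.image c = Finset.Icc 1 m := by
      apply Finset.eq_of_subset_of_card_le h1
      rw [h2, Nat.card_Icc]
      omega
    intro v hv
    have : v ∈ Finset.univ.image c := by
      rw [h3]; exact Finset.mem_Icc.mpr ⟨hv.1, hv.2⟩
    simpa using this
  -- global injectivity of π
  have hinj : Function.Injective π := by
    intro x y hxy
    by_cases hx : x ∈ Set.Icc 1 n <;> by_cases hy : y ∈ Set.Icc 1 n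
    · exact hbij.injOn hx hy hxy
    · exfalso; have := hmaps hx; rw [hxy, hid y hy] at this; exact hy this
    · exfalso; have := hmaps hy; rw [← hxy, hid x hx] at this; exact hx this
    · rw [hid x hx, hid y hy] at hxy; exact hxy
  intro x hx
  obtain ⟨i₀, hi₀⟩ := hcsurj (psi m x) (psi_mem m x hm0)
  -- iteration lemma
  have hiter : ∀ k : ℕ, π^[k] x ∈ Set.Icc 1 n ∧
      psi m (π^[k] x) = c (i₀ + (k : Fin m)) := by
    intro k
    induction k with
    | zero => simpa using ⟨hx, hi₀.symm⟩
    | succ k ih =>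
      obtain ⟨hmem, hpsi⟩ := ih
      have hs := hstep _ hmem (i₀ + (k : Fin m)) hpsi
      rw [Function.iterate_succ_apply']
      refine ⟨hmaps hmem, ?_⟩
      rw [hs.2]
      congr 1
      push_cast
      ring
  -- x is a periodic point
  have hfin : (Set.Icc 1 n).Finite := Set.finite_Icc _ _
  haveI := hfin.to_subtype
  have hper : x ∈ Function.periodicPts π := by
    obtain ⟨k, l, hkl, he⟩ := Finite.exists_ne_map_eq_of_infinite
      (fun k : ℕ => (⟨π^[k] x, (hiter k).1⟩ : Set.Icc 1 n))
    have he' : π^[k] x = π^[l] x := congrArg Subtype.val he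
    rcases Nat.lt_or_ge k l with h | h
    · have : π^[k] (π^[l - k] x) = π^[k] x := by
        rw [← Function.iterate_add_apply]
        rw [show k + (l - k) = l by omega]
        exact he'.symm
      have hd : π^[l - k] x = x := (hinj.iterate k) this
      exact Function.mk_mem_periodicPts (by omega) hd
    · have hkl' : l < k := by omega
      have : π^[l] (π^[k - l] x) = π^[l] x := by
        rw [← Function.iterate_add_apply]
        rw [show l + (k - l) = k by omega]
        exact he'
      have hd : π^[k - l] x = x := (hinj.iterate l) this
      exact Function.mk_mem_periodicPts (by omega) hd
  set T := Function.minimalPeriod π x with hT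
  have hTpos : 0 < T := Function.minimalPeriod_pos_of_mem_periodicPts hper
  have hTit : π^[T] x = x := Function.iterate_minimalPeriod
  -- m divides T
  have hTcast : (T : Fin m) = 0 := by
    have h1 := (hiter T).2
    rw [hTit, ← hi₀] at h1
    have h2 : i₀ = i₀ + (T : Fin m) := hcinj h1
    exact (left_eq_add.mp h2)
  have hmdT : m ∣ T := by
    have := congrArg Fin.val hTcast
    rw [Fin.val_natCast] at this
    exact Nat.dvd_of_mod_eq_zero (by simpa using this)
  refine ⟨hmdT, ?_, ?_⟩
  · -- a multiple of m in the orbit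
    obtain ⟨j, hj⟩ := hcsurj m ⟨by omega, le_refl m⟩
    refine ⟨(j - i₀).val, ?_⟩
    have h1 := (hiter (j - i₀).val).2
    rw [Fin.cast_val_eq_self, add_sub_cancel, hj] at h1
    exact psi_eq_self_dvd m _ hm0 h1
  · -- counting
    intro i hi
    obtain ⟨j, hj⟩ := hcsurj i hi
    have hkey : ∀ k : ℕ, psi m (π^[k] x) = i ↔ k % m = (j - i₀).val := by
      intro k
      rw [(hiter k).2, ← hj]
      constructor
      · intro h
        have h2 : i₀ + (k : Fin m) = j := hcinj h
        have h3 : (k : Fin m) = j - i₀ := by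
          rw [← h2]; ring
        have := congrArg Fin.val h3
        rwa [Fin.val_natCast] at this
      · intro h
        congr 1
        have h3 : (k : Fin m) = j - i₀ := by
          apply Fin.ext
          rw [Fin.val_natCast, h]
        rw [h3]; ring
    have hfe : (Finset.range T).filter (fun k => psi m (π^[k] x) = i) =
        (Finset.range T).filter (fun k => k % m = (j - i₀).val) := by
      apply Finset.filter_congr
      intro k _
      simp [hkey k]
    rw [hfe]
    have hTm : T = m * (T / m) := (Nat.mul_div_cancel' hmdT).symm
    have hcnt := count_mod m (T / m) (j - i₀).val (Fin.is_lt _)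
    rwa [← hTm] at hcnt
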